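/- arXiv:2410.08095 — 2 statements merged into one kernel-verified Lean document; each statement's English description precedes it below -/
import Mathlib

section
/- Let ψ, φ ∈ ℝ^d be descending probability vectors with all entries strictly positive such that ψ is not majorized by φ (so q_1 < 1), let φ^∧ = ψ∧φ, let q_j, l_j (j = 1,…,k) be given by the recursive construction for (ψ, φ), and set φ^f_i = q_j φ_i, φ^t_i = q_j (φ^∧)_i and n_i = (1 − q_1/q_j)/(1 − q_1) for i ∈ {l_j,…,l_{j−1}−1}, j ∈ {1,…,k}. Define the residual vectors μ_i = n_i φ^f_i and ν_i = n_i φ^t_i. Then μ and ν are descending probability vectors and ν ≺ μ: upon failure of the probabilistic transformation, the residual state of the thrifty protocol is more coherent than that of the greedy protocol. -/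
open Finset

/-- Tail-sum coherence monotone `C_l(p) = ∑_{i=l}^d p_i`, for a vector with (1-based)
entries `p 1, …, p d`.  Note `Cm d p (d+1) = 0` automatically. -/
noncomputable def Cm (d : ℕ) (p : ℕ → ℝ) (l : ℕ) : ℝ := ∑ i ∈ Finset.Icc l d, p i

/-- `p` is a descending probability vector on the (1-based) index range `{1, …, d}`. -/
structure DescProb (d : ℕ) (p : ℕ → ℝ) : Prop where
  nonneg : ∀ i, 1 ≤ i → i ≤ d → 0 ≤ p i
  anti : ∀ i j, 1 ≤ i → i ≤ j → j ≤ d → p j ≤ p i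
  sum_one : ∑ i ∈ Finset.Icc 1 d, p i = 1

/-- `p ≺ q` : `p` is majorized by `q` (both regarded as descending vectors on `{1, …, d}`). -/
def MajorizedBy (d : ℕ) (p q : ℕ → ℝ) : Prop :=
  (∀ k, 1 ≤ k → k ≤ d → ∑ i ∈ Finset.Icc 1 k, p i ≤ ∑ i ∈ Finset.Icc 1 k, q i) ∧
    ∑ i ∈ Finset.Icc 1 d, p i = ∑ i ∈ Finset.Icc 1 d, q i

/-- The ratio `(C_l(ψ) - C_prev(ψ)) / (C_l(φ) - C_prev(φ))` appearing in the recursive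
construction of the intermediate vector. -/
noncomputable def ratio (d : ℕ) (ψ φ : ℕ → ℝ) (prev l : ℕ) : ℝ :=
  (Cm d ψ l - Cm d ψ prev) / (Cm d φ l - Cm d φ prev)

/-- One step of the recursion: the minimal ratio over `l ∈ {1, …, prev - 1}`. -/
noncomputable def stepQ (d : ℕ) (ψ φ : ℕ → ℝ) (prev : ℕ) : ℝ :=
  sInf {x : ℝ | ∃ l, 1 ≤ l ∧ l ≤ prev - 1 ∧ x = ratio d ψ φ prev l}

/-- One step of the recursion: the smallest `l ∈ {1, …, prev - 1}` attaining the minimal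
ratio. -/
noncomputable def stepL (d : ℕ) (ψ φ : ℕ → ℝ) (prev : ℕ) : ℕ :=
  sInf {l : ℕ | 1 ≤ l ∧ l ≤ prev - 1 ∧ ratio d ψ φ prev l = stepQ d ψ φ prev}

/-- The sequence of indices `l_0 = d + 1 > l_1 > l_2 > ⋯` of the recursive construction. -/
noncomputable def Lseq (d : ℕ) (ψ φ : ℕ → ℝ) : ℕ → ℕ
  | 0 => d + 1
  | j + 1 => stepL d ψ φ (Lseq d ψ φ j)

/-- The sequence of ratios `q_1 < q_2 < ⋯` of the recursive construction (`Qseq d ψ φ j`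
is `q_j` for `j ≥ 1`; the value at `0` is irrelevant). -/
noncomputable def Qseq (d : ℕ) (ψ φ : ℕ → ℝ) : ℕ → ℝ
  | 0 => 1
  | j + 1 => stepQ d ψ φ (Lseq d ψ φ j)

/-- The terminating step `k` of the recursion: the first index `j` with `l_j = 1`. -/
noncomputable def kstop (d : ℕ) (ψ φ : ℕ → ℝ) : ℕ := sInf {j : ℕ | Lseq d ψ φ j = 1}

/-- The intermediate vector `φ^f`, with `φ^f_i = q_j φ_i` for `i ∈ {l_j, …, l_{j-1} - 1}`
(for `i ∈ {1, …, d}`, the smallest `j` with `l_j ≤ i` is precisely the `j` with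
`l_j ≤ i ≤ l_{j-1} - 1`). -/
noncomputable def phif (d : ℕ) (ψ φ : ℕ → ℝ) (i : ℕ) : ℝ :=
  Qseq d ψ φ (sInf {j : ℕ | Lseq d ψ φ j ≤ i}) * φ i

/-- The meet `p ∧ q` of two descending probability vectors in the majorization lattice,
defined componentwise via prefix sums (empty sums are `0`). -/
noncomputable def meet2 (p q : ℕ → ℝ) (i : ℕ) : ℝ :=
  min (∑ j ∈ Finset.Icc 1 i, p j) (∑ j ∈ Finset.Icc 1 i, q j) -
    min (∑ j ∈ Finset.Icc 1 (i - 1), p j) (∑ j ∈ Finset.Icc 1 (i - 1), q j)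

/-- The intermediate vector `φ^t` of the thrifty protocol, with `φ^t_i = q_j (ψ ∧ φ)_i`
for `i ∈ {l_j, …, l_{j-1} - 1}`. -/
noncomputable def phit (d : ℕ) (ψ φ : ℕ → ℝ) (i : ℕ) : ℝ :=
  Qseq d ψ φ (sInf {j : ℕ | Lseq d ψ φ j ≤ i}) * meet2 ψ φ i

/-- The failure-branch weights `n_i = (1 - q_1 / q_j) / (1 - q_1)` for
`i ∈ {l_j, …, l_{j-1} - 1}`. -/
noncomputable def nvec (d : ℕ) (ψ φ : ℕ → ℝ) (i : ℕ) : ℝ :=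
  (1 - Qseq d ψ φ 1 / Qseq d ψ φ (sInf {j : ℕ | Lseq d ψ φ j ≤ i})) / (1 - Qseq d ψ φ 1)


namespace ThriftyAux

open Finset

lemma Cm_Ico (d : ℕ) (p : ℕ → ℝ) (l : ℕ) : Cm d p l = ∑ i ∈ Finset.Ico l (d+1), p i := by
  rw [Cm, Finset.Ico_add_one_right_eq_Icc]

lemma Cm_top (d : ℕ) (p : ℕ → ℝ) : Cm d p (d+1) = 0 := by
  simp [Cm]

lemma Cm_sub (d : ℕ) (p : ℕ → ℝ) {l m : ℕ} (hlm : l ≤ m) (hm : m ≤ d+1) :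
    Cm d p l - Cm d p m = ∑ i ∈ Finset.Ico l m, p i := by
  rw [Cm_Ico, Cm_Ico, ← Finset.sum_Ico_consecutive _ hlm hm]
  ring

lemma Cm_sub_pos (d : ℕ) {p : ℕ → ℝ} (hpos : ∀ i, 1 ≤ i → i ≤ d → 0 < p i)
    {l m : ℕ} (h1 : 1 ≤ l) (hlm : l < m) (hm : m ≤ d+1) : 0 < Cm d p l - Cm d p m := by
  rw [Cm_sub d p hlm.le hm]
  apply Finset.sum_pos
  · intro i hi
    rw [Finset.mem_Ico] at hi
    exact hpos i (h1.trans hi.1) (by omega)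
  · exact ⟨l, Finset.mem_Ico.mpr ⟨le_refl l, hlm⟩⟩

/-- Basic properties of one recursion step. -/
lemma step_spec (d : ℕ) (ψ φ : ℕ → ℝ) (prev : ℕ) (h2 : 2 ≤ prev) :
    (1 ≤ stepL d ψ φ prev ∧ stepL d ψ φ prev ≤ prev - 1 ∧
      ratio d ψ φ prev (stepL d ψ φ prev) = stepQ d ψ φ prev) ∧
    ∀ l, 1 ≤ l → l ≤ prev - 1 → stepQ d ψ φ prev ≤ ratio d ψ φ prev l := by
  set S : Set ℝ := {x : ℝ | ∃ l, 1 ≤ l ∧ l ≤ prev - 1 ∧ x = ratio d ψ φ prev l} with hS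
  have hfin : S.Finite := by
    apply ((Set.finite_Icc 1 (prev-1)).image (fun l => ratio d ψ φ prev l)).subset
    rintro x ⟨l, h1, h2, rfl⟩
    exact ⟨l, ⟨h1, h2⟩, rfl⟩
  have hne : S.Nonempty := ⟨ratio d ψ φ prev 1, 1, le_refl 1, by omega, rfl⟩
  have hmem : sInf S ∈ S := hne.csInf_mem hfin
  have hlow : ∀ l, 1 ≤ l → l ≤ prev - 1 → sInf S ≤ ratio d ψ φ prev l := by
    intro l hl1 hl2
    exact csInf_le hfin.bddBelow ⟨l, hl1, hl2, rfl⟩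
  obtain ⟨l₀, hl₀1, hl₀2, hl₀3⟩ := hmem
  have hQ : stepQ d ψ φ prev = sInf S := rfl
  have hTne : l₀ ∈ {l : ℕ | 1 ≤ l ∧ l ≤ prev - 1 ∧ ratio d ψ φ prev l = stepQ d ψ φ prev} :=
    ⟨hl₀1, hl₀2, by rw [hQ, ← hl₀3]⟩
  have hLmem := Nat.sInf_mem (⟨l₀, hTne⟩ :
    {l : ℕ | 1 ≤ l ∧ l ≤ prev - 1 ∧ ratio d ψ φ prev l = stepQ d ψ φ prev}.Nonempty)
  exact ⟨⟨hLmem.1, hLmem.2.1, hLmem.2.2⟩, fun l h1 h2 => hlow l h1 h2⟩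

/-- Bundle of the standing hypotheses. -/
structure Setup (d : ℕ) (ψ φ : ℕ → ℝ) : Prop where
  hd : 1 ≤ d
  hψ : DescProb d ψ
  hφ : DescProb d φ
  hψpos : ∀ i, 1 ≤ i → i ≤ d → 0 < ψ i
  hφpos : ∀ i, 1 ≤ i → i ≤ d → 0 < φ i

variable {d : ℕ} {ψ φ : ℕ → ℝ}

lemma L_step (S : Setup d ψ φ) {j : ℕ} (h2 : 2 ≤ Lseq d ψ φ j) :
    (1 ≤ Lseq d ψ φ (j+1) ∧ Lseq d ψ φ (j+1) ≤ Lseq d ψ φ j - 1 ∧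
      ratio d ψ φ (Lseq d ψ φ j) (Lseq d ψ φ (j+1)) = Qseq d ψ φ (j+1)) ∧
    ∀ l, 1 ≤ l → l ≤ Lseq d ψ φ j - 1 →
      Qseq d ψ φ (j+1) ≤ ratio d ψ φ (Lseq d ψ φ j) l :=
  step_spec d ψ φ (Lseq d ψ φ j) h2

lemma exists_L_one (S : Setup d ψ φ) : ∃ j, Lseq d ψ φ j = 1 := by
  have key : ∀ n j, Lseq d ψ φ j ≤ n + 1 → 1 ≤ Lseq d ψ φ j → ∃ j', Lseq d ψ φ j' = 1 := by
    intro n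
    induction n with
    | zero => intro j h1 h2; exact ⟨j, le_antisymm h1 h2⟩
    | succ n ih =>
      intro j h1 h2
      rcases eq_or_lt_of_le h2 with h | h
      · exact ⟨j, h.symm⟩
      · obtain ⟨⟨ha, hb, -⟩, -⟩ := L_step S h
        exact ih (j+1) (by omega) ha
  exact key d 0 (by simp [Lseq]) (by simp [Lseq])

lemma L_kstop (S : Setup d ψ φ) : Lseq d ψ φ (kstop d ψ φ) = 1 :=
  Nat.sInf_mem (exists_L_one S)

lemma L_ne_one (S : Setup d ψ φ) {j : ℕ} (hj : j < kstop d ψ φ) : Lseq d ψ φ j ≠ 1 := by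
  have hj' : j < sInf {j : ℕ | Lseq d ψ φ j = 1} := hj
  have h2 := Nat.notMem_of_lt_sInf (s := {j : ℕ | Lseq d ψ φ j = 1}) hj'
  simpa using h2

lemma L_bounds (S : Setup d ψ φ) : ∀ j, j ≤ kstop d ψ φ →
    1 ≤ Lseq d ψ φ j ∧ Lseq d ψ φ j ≤ d + 1 := by
  intro j
  induction j with
  | zero => intro _; simp [Lseq]
  | succ j ih =>
    intro hj
    have hjK : j < kstop d ψ φ := by omega
    obtain ⟨h1, h2⟩ := ih (by omega)
    have h2' : 2 ≤ Lseq d ψ φ j := by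
      have := L_ne_one S hjK; omega
    obtain ⟨⟨ha, hb, -⟩, -⟩ := L_step S h2'
    exact ⟨ha, by omega⟩

lemma L_two (S : Setup d ψ φ) {j : ℕ} (hj : j < kstop d ψ φ) : 2 ≤ Lseq d ψ φ j := by
  have := (L_bounds S j hj.le).1
  have := L_ne_one S hj
  omega

lemma L_succ_lt (S : Setup d ψ φ) {j : ℕ} (hj : j < kstop d ψ φ) :
    Lseq d ψ φ (j+1) < Lseq d ψ φ j := by
  have h2 := L_two S hj
  obtain ⟨⟨ha, hb, -⟩, -⟩ := L_step S h2
  omega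

lemma L_anti (S : Setup d ψ φ) {j₁ j₂ : ℕ} (h12 : j₁ ≤ j₂) (h2 : j₂ ≤ kstop d ψ φ) :
    Lseq d ψ φ j₂ ≤ Lseq d ψ φ j₁ := by
  induction j₂, h12 using Nat.le_induction with
  | base => exact le_refl _
  | succ j₂ hj ih =>
    have := L_succ_lt S (show j₂ < kstop d ψ φ by omega)
    have := ih (by omega)
    omega

lemma kstop_pos (S : Setup d ψ φ) : 1 ≤ kstop d ψ φ := by
  by_contra h
  have h0 : kstop d ψ φ = 0 := by omega
  have h1 := L_kstop S
  rw [h0] at h1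
  have h2 : Lseq d ψ φ 0 = d + 1 := rfl
  have := S.hd
  omega

lemma Q_eq (S : Setup d ψ φ) {j : ℕ} (hj : j < kstop d ψ φ) :
    Cm d ψ (Lseq d ψ φ (j+1)) - Cm d ψ (Lseq d ψ φ j) =
      Qseq d ψ φ (j+1) * (Cm d φ (Lseq d ψ φ (j+1)) - Cm d φ (Lseq d ψ φ j)) := by
  have h2 := L_two S hj
  obtain ⟨⟨ha, hb, hc⟩, -⟩ := L_step S h2
  have hjK : j + 1 ≤ kstop d ψ φ := hj
  have hLd := (L_bounds S j hj.le).2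
  have hden : 0 < Cm d φ (Lseq d ψ φ (j+1)) - Cm d φ (Lseq d ψ φ j) :=
    Cm_sub_pos d S.hφpos ha (by omega) hLd
  rw [← hc, ratio, div_mul_cancel₀]
  exact hden.ne'

lemma Q_pos (S : Setup d ψ φ) {j : ℕ} (hj : j < kstop d ψ φ) : 0 < Qseq d ψ φ (j+1) := by
  have h2 := L_two S hj
  obtain ⟨⟨ha, hb, hc⟩, -⟩ := L_step S h2
  have hLd := (L_bounds S j hj.le).2
  rw [← hc, ratio]
  exact div_pos (Cm_sub_pos d S.hψpos ha (by omega) hLd) (Cm_sub_pos d S.hφpos ha (by omega) hLd)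

lemma Q_le_ratio_mul (S : Setup d ψ φ) {j l : ℕ} (hj : j < kstop d ψ φ)
    (h1 : 1 ≤ l) (h2 : l ≤ Lseq d ψ φ j - 1) :
    Qseq d ψ φ (j+1) * (Cm d φ l - Cm d φ (Lseq d ψ φ j)) ≤
      Cm d ψ l - Cm d ψ (Lseq d ψ φ j) := by
  have hL2 := L_two S hj
  obtain ⟨-, hmin⟩ := L_step S hL2
  have hLd := (L_bounds S j hj.le).2
  have hden : 0 < Cm d φ l - Cm d φ (Lseq d ψ φ j) :=
    Cm_sub_pos d S.hφpos h1 (by omega) hLd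
  have := hmin l h1 h2
  rw [ratio, le_div_iff₀ hden] at this
  exact this

lemma Q_step_mono (S : Setup d ψ φ) {j : ℕ} (h1 : 1 ≤ j) (hj : j < kstop d ψ φ) :
    Qseq d ψ φ j ≤ Qseq d ψ φ (j+1) := by
  obtain ⟨j', rfl⟩ : ∃ j', j = j' + 1 := ⟨j - 1, by omega⟩
  have hj' : j' < kstop d ψ φ := by omega
  have hjK : j' + 1 + 1 ≤ kstop d ψ φ := hj
  have hstep : Lseq d ψ φ (j'+1+1) < Lseq d ψ φ (j'+1) := L_succ_lt S hj
  have hstep' : Lseq d ψ φ (j'+1) < Lseq d ψ φ j' := L_succ_lt S hj'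
  have h1L := (L_bounds S (j'+1+1) hjK).1
  have hA := Q_le_ratio_mul S hj' h1L (by omega)
  have hB := Q_eq S hj'
  have hC := Q_eq S hj
  have hX : 0 < Cm d φ (Lseq d ψ φ (j'+1+1)) - Cm d φ (Lseq d ψ φ (j'+1)) :=
    Cm_sub_pos d S.hφpos h1L hstep (L_bounds S (j'+1) hj.le).2
  have hkey : Qseq d ψ φ (j'+1) * (Cm d φ (Lseq d ψ φ (j'+1+1)) - Cm d φ (Lseq d ψ φ (j'+1)))
      ≤ Qseq d ψ φ (j'+1+1) * (Cm d φ (Lseq d ψ φ (j'+1+1)) - Cm d φ (Lseq d ψ φ (j'+1))) := by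
    nlinarith [hA, hB, hC]
  exact le_of_mul_le_mul_right hkey hX

lemma Q_mono (S : Setup d ψ φ) {j₁ j₂ : ℕ} (h1 : 1 ≤ j₁) (h12 : j₁ ≤ j₂)
    (h2 : j₂ ≤ kstop d ψ φ) : Qseq d ψ φ j₁ ≤ Qseq d ψ φ j₂ := by
  induction j₂, h12 using Nat.le_induction with
  | base => exact le_refl _
  | succ j₂ hj ih =>
    exact (ih (by omega)).trans (Q_step_mono S (by omega) (by omega))

lemma q1_pos (S : Setup d ψ φ) : 0 < Qseq d ψ φ 1 := Q_pos S (kstop_pos S)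

lemma Cm_one_ψ (S : Setup d ψ φ) : Cm d ψ 1 = 1 := S.hψ.sum_one

lemma Cm_one_φ (S : Setup d ψ φ) : Cm d φ 1 = 1 := S.hφ.sum_one

lemma D_step (S : Setup d ψ φ) {j : ℕ} (hj : j < kstop d ψ φ) :
    (Cm d ψ (Lseq d ψ φ (j+1)) - Cm d φ (Lseq d ψ φ (j+1))) -
      (Cm d ψ (Lseq d ψ φ j) - Cm d φ (Lseq d ψ φ j)) =
    (Qseq d ψ φ (j+1) - 1) * (Cm d φ (Lseq d ψ φ (j+1)) - Cm d φ (Lseq d ψ φ j)) := by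
  have := Q_eq S hj
  ring_nf
  ring_nf at this
  linarith

lemma D_nonpos (S : Setup d ψ φ) : ∀ j, j ≤ kstop d ψ φ →
    Cm d ψ (Lseq d ψ φ j) ≤ Cm d φ (Lseq d ψ φ j) := by
  have aux1 : ∀ j, j ≤ kstop d ψ φ → (∀ j', 1 ≤ j' → j' ≤ j → Qseq d ψ φ j' ≤ 1) →
      Cm d ψ (Lseq d ψ φ j) ≤ Cm d φ (Lseq d ψ φ j) := by
    intro j
    induction j with
    | zero =>
      intro _ _
      have h0 : Lseq d ψ φ 0 = d + 1 := rfl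
      rw [h0, Cm_top, Cm_top]
    | succ j ih =>
      intro hj hq
      have hj' : j < kstop d ψ φ := by omega
      have hd := D_step S hj'
      have hX : 0 < Cm d φ (Lseq d ψ φ (j+1)) - Cm d φ (Lseq d ψ φ j) :=
        Cm_sub_pos d S.hφpos (L_bounds S (j+1) hj).1 (L_succ_lt S hj')
          (L_bounds S j hj'.le).2
      have hq1 : Qseq d ψ φ (j+1) ≤ 1 := hq (j+1) (by omega) (le_refl _)
      have := ih (by omega) (fun j' a b => hq j' a (by omega))
      nlinarith
  have aux2 : ∀ m j, j + m = kstop d ψ φ →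
      (∀ j', j < j' → j' ≤ kstop d ψ φ → 1 ≤ Qseq d ψ φ j') →
      Cm d ψ (Lseq d ψ φ j) ≤ Cm d φ (Lseq d ψ φ j) := by
    intro m
    induction m with
    | zero =>
      intro j hj _
      have : j = kstop d ψ φ := by omega
      rw [this, L_kstop S, Cm_one_ψ S, Cm_one_φ S]
    | succ m ih =>
      intro j hj hq
      have hj' : j < kstop d ψ φ := by omega
      have hd := D_step S hj'
      have hX : 0 < Cm d φ (Lseq d ψ φ (j+1)) - Cm d φ (Lseq d ψ φ j) :=
        Cm_sub_pos d S.hφpos (L_bounds S (j+1) hj').1 (L_succ_lt S hj')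
          (L_bounds S j hj'.le).2
      have hq1 : 1 ≤ Qseq d ψ φ (j+1) := hq (j+1) (by omega) (by omega)
      have := ih (j+1) (by omega) (fun j' a b => hq j' (by omega) b)
      nlinarith
  intro j hj
  by_cases hc : ∀ j', 1 ≤ j' → j' ≤ j → Qseq d ψ φ j' ≤ 1
  · exact aux1 j hj hc
  · push_neg at hc
    obtain ⟨j₀, hj₀1, hj₀2, hj₀3⟩ := hc
    refine aux2 (kstop d ψ φ - j) j (by omega) (fun j' hjj' hj'K => ?_)
    exact le_trans hj₀3.le (Q_mono S hj₀1 (by omega) hj'K)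

lemma pre_succ (p : ℕ → ℝ) {i : ℕ} (h1 : 1 ≤ i) :
    ∑ x ∈ Finset.Icc 1 i, p x = (∑ x ∈ Finset.Icc 1 (i-1), p x) + p i := by
  obtain ⟨b, rfl⟩ : ∃ b, i = b + 1 := ⟨i - 1, by omega⟩
  rw [Finset.sum_Icc_succ_top (by omega : 1 ≤ b + 1)]
  simp

lemma prefix_meet (ψ φ : ℕ → ℝ) (k : ℕ) :
    ∑ i ∈ Finset.Icc 1 k, meet2 ψ φ i =
      min (∑ i ∈ Finset.Icc 1 k, ψ i) (∑ i ∈ Finset.Icc 1 k, φ i) := by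
  induction k with
  | zero => simp
  | succ k ih =>
    rw [Finset.sum_Icc_succ_top (by omega : 1 ≤ k + 1), ih, meet2]
    simp

lemma pre_add_Cm (d : ℕ) (p : ℕ → ℝ) {l : ℕ} (h1 : 1 ≤ l) (hl : l ≤ d+1) :
    (∑ x ∈ Finset.Icc 1 (l-1), p x) + Cm d p l = ∑ x ∈ Finset.Icc 1 d, p x := by
  have h : Finset.Icc 1 (l-1) = Finset.Ico 1 l := by
    rw [← Finset.Ico_add_one_right_eq_Icc]
    congr 1
    omega
  rw [h, Cm_Ico, Finset.sum_Ico_consecutive _ (by omega : 1 ≤ l) hl, Finset.Ico_add_one_right_eq_Icc]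

lemma one_sub_min (a b : ℝ) : 1 - min (1-a) (1-b) = max a b := by
  rcases le_total a b with h | h
  · rw [max_eq_right h, min_eq_right (by linarith)]; ring
  · rw [max_eq_left h, min_eq_left (by linarith)]; ring

lemma Cm_meet (S : Setup d ψ φ) {l : ℕ} (h1 : 1 ≤ l) (hl : l ≤ d+1) :
    Cm d (meet2 ψ φ) l = max (Cm d ψ l) (Cm d φ l) := by
  have hm := pre_add_Cm d (meet2 ψ φ) h1 hl
  have hψm := pre_add_Cm d ψ h1 hl
  have hφm := pre_add_Cm d φ h1 hl
  rw [prefix_meet, prefix_meet, S.hψ.sum_one, S.hφ.sum_one] at hm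
  rw [S.hψ.sum_one] at hψm
  rw [S.hφ.sum_one] at hφm
  rw [min_self] at hm
  have e1 : ∑ x ∈ Finset.Icc 1 (l-1), ψ x = 1 - Cm d ψ l := by linarith
  have e2 : ∑ x ∈ Finset.Icc 1 (l-1), φ x = 1 - Cm d φ l := by linarith
  rw [e1, e2] at hm
  have := one_sub_min (Cm d ψ l) (Cm d φ l)
  linarith

lemma meet_nonneg (S : Setup d ψ φ) {i : ℕ} (h1 : 1 ≤ i) (hi : i ≤ d) :
    0 ≤ meet2 ψ φ i := by
  rw [meet2]
  have hψi := pre_succ ψ h1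
  have hφi := pre_succ φ h1
  have hψ0 := S.hψ.nonneg i h1 hi
  have hφ0 := S.hφ.nonneg i h1 hi
  have h1' : min (∑ x ∈ Finset.Icc 1 (i-1), ψ x) (∑ x ∈ Finset.Icc 1 (i-1), φ x) ≤
      ∑ x ∈ Finset.Icc 1 i, ψ x := by
    rw [hψi]; exact le_add_of_le_of_nonneg (min_le_left _ _) hψ0
  have h2' : min (∑ x ∈ Finset.Icc 1 (i-1), ψ x) (∑ x ∈ Finset.Icc 1 (i-1), φ x) ≤
      ∑ x ∈ Finset.Icc 1 i, φ x := by
    rw [hφi]; exact le_add_of_le_of_nonneg (min_le_right _ _) hφ0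
  have := le_min h1' h2'
  linarith

lemma meet_adj (S : Setup d ψ φ) {i : ℕ} (h1 : 1 ≤ i) (hi : i + 1 ≤ d) :
    meet2 ψ φ (i+1) ≤ meet2 ψ φ i := by
  have hψ1 := pre_succ ψ (by omega : (1:ℕ) ≤ i + 1)
  have hφ1 := pre_succ φ (by omega : (1:ℕ) ≤ i + 1)
  have hψ2 := pre_succ ψ h1
  have hφ2 := pre_succ φ h1
  simp only [Nat.add_sub_cancel] at hψ1 hφ1
  have hψa : ψ (i+1) ≤ ψ i := S.hψ.anti i (i+1) h1 (by omega) hi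
  have hφa : φ (i+1) ≤ φ i := S.hφ.anti i (i+1) h1 (by omega) hi
  set A1 := ∑ x ∈ Finset.Icc 1 (i+1), ψ x
  set B1 := ∑ x ∈ Finset.Icc 1 (i+1), φ x
  set A := ∑ x ∈ Finset.Icc 1 i, ψ x
  set B := ∑ x ∈ Finset.Icc 1 i, φ x
  set A0 := ∑ x ∈ Finset.Icc 1 (i-1), ψ x
  set B0 := ∑ x ∈ Finset.Icc 1 (i-1), φ x
  have key : min A1 B1 + min A0 B0 ≤ 2 * min A B := by
    have t1 : min A1 B1 + min A0 B0 ≤ 2 * A := by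
      have := min_le_left A1 B1
      have := min_le_left A0 B0
      linarith
    have t2 : min A1 B1 + min A0 B0 ≤ 2 * B := by
      have := min_le_right A1 B1
      have := min_le_right A0 B0
      linarith
    rcases le_total A B with h | h
    · rw [min_eq_left h]; exact t1
    · rw [min_eq_right h]; exact t2
  rw [meet2, meet2]
  simp only [Nat.add_sub_cancel]
  change min A1 B1 - min A B ≤ min A B - min A0 B0
  linarith

lemma anti_of_adj (dd : ℕ) (f : ℕ → ℝ) (h : ∀ i, 1 ≤ i → i + 1 ≤ dd → f (i+1) ≤ f i) :
    ∀ i j, 1 ≤ i → i ≤ j → j ≤ dd → f j ≤ f i := by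
  intro i j hi hij hjd
  induction j, hij using Nat.le_induction with
  | base => exact le_refl _
  | succ j hj ih =>
    exact le_trans (h j (by omega) hjd) (ih (by omega))


lemma Cm_nonneg (d : ℕ) {p : ℕ → ℝ} (hpos : ∀ i, 1 ≤ i → i ≤ d → 0 ≤ p i) {l : ℕ}
    (h1 : 1 ≤ l) : 0 ≤ Cm d p l := by
  apply Finset.sum_nonneg
  intro i hi
  rw [Finset.mem_Icc] at hi
  exact hpos i (by omega) hi.2

lemma q1_lt_one (S : Setup d ψ φ) (hnm : ¬ MajorizedBy d ψ φ) : Qseq d ψ φ 1 < 1 := by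
  rw [MajorizedBy, not_and_or] at hnm
  rcases hnm with hnm | hnm
  · push_neg at hnm
    obtain ⟨k, hk1, hkd, hk⟩ := hnm
    have hψk := pre_add_Cm d ψ (by omega : (1:ℕ) ≤ k + 1) (by omega)
    have hφk := pre_add_Cm d φ (by omega : (1:ℕ) ≤ k + 1) (by omega)
    simp only [Nat.add_sub_cancel] at hψk hφk
    rw [S.hψ.sum_one] at hψk
    rw [S.hφ.sum_one] at hφk
    have hlt : Cm d ψ (k+1) < Cm d φ (k+1) := by linarith
    have hψnn : 0 ≤ Cm d ψ (k+1) := Cm_nonneg d (fun i a b => (S.hψpos i a b).le) (by omega)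
    have hkd' : k + 1 ≤ d := by
      by_contra h
      have : k = d := by omega
      subst this
      rw [Cm_top, Cm_top] at hlt
      linarith
    have hQ := Q_le_ratio_mul S (j := 0) (kstop_pos S) (by omega : (1:ℕ) ≤ k+1)
      (by show k + 1 ≤ Lseq d ψ φ 0 - 1; have : Lseq d ψ φ 0 = d + 1 := rfl; omega)
    have hL0 : Lseq d ψ φ 0 = d + 1 := rfl
    rw [hL0, Cm_top, Cm_top] at hQ
    have hφpos' : 0 < Cm d φ (k+1) := by linarith
    nlinarith
  · exact absurd (by rw [S.hψ.sum_one, S.hφ.sum_one]) hnm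

lemma J_spec (S : Setup d ψ φ) {i : ℕ} (h1 : 1 ≤ i) (hi : i ≤ d) :
    1 ≤ sInf {j : ℕ | Lseq d ψ φ j ≤ i} ∧ sInf {j : ℕ | Lseq d ψ φ j ≤ i} ≤ kstop d ψ φ ∧
      Lseq d ψ φ (sInf {j : ℕ | Lseq d ψ φ j ≤ i}) ≤ i ∧
      i < Lseq d ψ φ (sInf {j : ℕ | Lseq d ψ φ j ≤ i} - 1) := by
  have hKmem : kstop d ψ φ ∈ {j : ℕ | Lseq d ψ φ j ≤ i} := by
    show Lseq d ψ φ (kstop d ψ φ) ≤ i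
    rw [L_kstop S]; exact h1
  have hmem := Nat.sInf_mem (⟨_, hKmem⟩ : {j : ℕ | Lseq d ψ φ j ≤ i}.Nonempty)
  have hle : sInf {j : ℕ | Lseq d ψ φ j ≤ i} ≤ kstop d ψ φ := Nat.sInf_le hKmem
  have hpos : 1 ≤ sInf {j : ℕ | Lseq d ψ φ j ≤ i} := by
    by_contra h
    have h0 : sInf {j : ℕ | Lseq d ψ φ j ≤ i} = 0 := by omega
    rw [h0] at hmem
    have : Lseq d ψ φ 0 = d + 1 := rfl
    have hm : Lseq d ψ φ 0 ≤ i := hmem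
    omega
  refine ⟨hpos, hle, hmem, ?_⟩
  by_contra h
  push_neg at h
  have hlt : sInf {j : ℕ | Lseq d ψ φ j ≤ i} - 1 < sInf {j : ℕ | Lseq d ψ φ j ≤ i} := by omega
  have := Nat.notMem_of_lt_sInf (s := {j : ℕ | Lseq d ψ φ j ≤ i}) hlt
  exact this h

lemma J_eq (S : Setup d ψ φ) {j i : ℕ} (hj1 : 1 ≤ j) (hjK : j ≤ kstop d ψ φ)
    (hli : Lseq d ψ φ j ≤ i) (hiu : i < Lseq d ψ φ (j-1)) :
    sInf {j' : ℕ | Lseq d ψ φ j' ≤ i} = j := by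
  have hmem : j ∈ {j' : ℕ | Lseq d ψ φ j' ≤ i} := hli
  have hle : sInf {j' : ℕ | Lseq d ψ φ j' ≤ i} ≤ j := Nat.sInf_le hmem
  have hmem' := Nat.sInf_mem (⟨j, hmem⟩ : {j' : ℕ | Lseq d ψ φ j' ≤ i}.Nonempty)
  have hge : j ≤ sInf {j' : ℕ | Lseq d ψ φ j' ≤ i} := by
    by_contra h
    push_neg at h
    have h' : sInf {j' : ℕ | Lseq d ψ φ j' ≤ i} ≤ j - 1 := by omega
    have hanti := L_anti S h' (by omega)
    have : Lseq d ψ φ (sInf {j' : ℕ | Lseq d ψ φ j' ≤ i}) ≤ i := hmem'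
    omega
  omega

/-- The per-index factor of the intermediate vectors. -/
noncomputable def Rfun (d : ℕ) (ψ φ : ℕ → ℝ) (i : ℕ) : ℝ :=
  Qseq d ψ φ (sInf {j : ℕ | Lseq d ψ φ j ≤ i})

lemma R_on_block (S : Setup d ψ φ) {j i : ℕ} (hj1 : 1 ≤ j) (hjK : j ≤ kstop d ψ φ)
    (hli : Lseq d ψ φ j ≤ i) (hiu : i < Lseq d ψ φ (j-1)) :
    Rfun d ψ φ i = Qseq d ψ φ j := by
  rw [Rfun, J_eq S hj1 hjK hli hiu]

lemma R_props (S : Setup d ψ φ) {i : ℕ} (h1 : 1 ≤ i) (hi : i ≤ d) :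
    Qseq d ψ φ 1 ≤ Rfun d ψ φ i ∧ 0 < Rfun d ψ φ i := by
  obtain ⟨hJ1, hJK, -, -⟩ := J_spec S h1 hi
  constructor
  · exact Q_mono S (le_refl 1) hJ1 hJK
  · rw [Rfun]
    obtain ⟨a, ha⟩ : ∃ a, sInf {j : ℕ | Lseq d ψ φ j ≤ i} = a + 1 :=
      ⟨sInf {j : ℕ | Lseq d ψ φ j ≤ i} - 1, by omega⟩
    rw [ha]
    exact Q_pos S (by omega)

lemma R_anti (S : Setup d ψ φ) {i i' : ℕ} (h1 : 1 ≤ i) (hii : i ≤ i') (hi' : i' ≤ d) :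
    Rfun d ψ φ i' ≤ Rfun d ψ φ i := by
  obtain ⟨hJ1, hJK, hJm, -⟩ := J_spec S h1 (by omega)
  obtain ⟨hJ1', hJK', -, -⟩ := J_spec S (by omega) hi'
  have hsub : sInf {j : ℕ | Lseq d ψ φ j ≤ i'} ≤ sInf {j : ℕ | Lseq d ψ φ j ≤ i} :=
    Nat.sInf_le (show Lseq d ψ φ (sInf {j : ℕ | Lseq d ψ φ j ≤ i}) ≤ i' by omega)
  exact Q_mono S hJ1' hsub hJK

lemma tailB (S : Setup d ψ φ) : ∀ j, j ≤ kstop d ψ φ →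
    (∑ i ∈ Finset.Ico (Lseq d ψ φ j) (d+1), Rfun d ψ φ i * φ i = Cm d ψ (Lseq d ψ φ j)) ∧
    (∑ i ∈ Finset.Ico (Lseq d ψ φ j) (d+1), Rfun d ψ φ i * meet2 ψ φ i =
      Cm d ψ (Lseq d ψ φ j)) := by
  intro j
  induction j with
  | zero =>
    intro _
    have h0 : Lseq d ψ φ 0 = d + 1 := rfl
    rw [h0, Cm_top]
    simp
  | succ j ih =>
    intro hj
    have hj' : j < kstop d ψ φ := by omega
    obtain ⟨ih1, ih2⟩ := ih hj'.le
    have hlt := L_succ_lt S hj'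
    have hb1 := L_bounds S (j+1) hj
    have hb0 := L_bounds S j hj'.le
    have hblock : ∀ i ∈ Finset.Ico (Lseq d ψ φ (j+1)) (Lseq d ψ φ j),
        Rfun d ψ φ i = Qseq d ψ φ (j+1) := by
      intro i hi
      rw [Finset.mem_Ico] at hi
      exact R_on_block S (by omega) hj hi.1 (by simpa using hi.2)
    have hsplit : ∀ f : ℕ → ℝ, ∑ i ∈ Finset.Ico (Lseq d ψ φ (j+1)) (d+1), f i =
        (∑ i ∈ Finset.Ico (Lseq d ψ φ (j+1)) (Lseq d ψ φ j), f i) +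
        ∑ i ∈ Finset.Ico (Lseq d ψ φ j) (d+1), f i := by
      intro f
      rw [Finset.sum_Ico_consecutive _ (by omega : Lseq d ψ φ (j+1) ≤ Lseq d ψ φ j)
        (by omega : Lseq d ψ φ j ≤ d+1)]
    have hQe := Q_eq S hj'
    constructor
    · rw [hsplit, ih1]
      have : ∑ i ∈ Finset.Ico (Lseq d ψ φ (j+1)) (Lseq d ψ φ j), Rfun d ψ φ i * φ i =
          Qseq d ψ φ (j+1) * ∑ i ∈ Finset.Ico (Lseq d ψ φ (j+1)) (Lseq d ψ φ j), φ i := by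
        rw [Finset.mul_sum]
        exact Finset.sum_congr rfl (fun i hi => by rw [hblock i hi])
      rw [this, ← Cm_sub d φ (by omega) (by omega)]
      linarith
    · rw [hsplit, ih2]
      have : ∑ i ∈ Finset.Ico (Lseq d ψ φ (j+1)) (Lseq d ψ φ j), Rfun d ψ φ i * meet2 ψ φ i =
          Qseq d ψ φ (j+1) * ∑ i ∈ Finset.Ico (Lseq d ψ φ (j+1)) (Lseq d ψ φ j), meet2 ψ φ i := by
        rw [Finset.mul_sum]
        exact Finset.sum_congr rfl (fun i hi => by rw [hblock i hi])
      rw [this, ← Cm_sub d (meet2 ψ φ) (by omega) (by omega),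
        Cm_meet S (by omega) (by omega), Cm_meet S (by omega) (by omega),
        max_eq_right (D_nonpos S (j+1) hj), max_eq_right (D_nonpos S j hj'.le)]
      linarith

lemma tail_diff (S : Setup d ψ φ) {l : ℕ} (h1 : 1 ≤ l) (hl : l ≤ d) :
    (∑ i ∈ Finset.Ico l (d+1), Rfun d ψ φ i * meet2 ψ φ i) -
      (∑ i ∈ Finset.Ico l (d+1), Rfun d ψ φ i * φ i) =
    Rfun d ψ φ l * (Cm d (meet2 ψ φ) l - Cm d φ l) := by
  obtain ⟨hJ1, hJK, hJm, hJu⟩ := J_spec S h1 hl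
  set j := sInf {j : ℕ | Lseq d ψ φ j ≤ l} with hjdef
  have hbj := L_bounds S (j-1) (by omega)
  have hsplit : ∀ f : ℕ → ℝ, ∑ i ∈ Finset.Ico l (d+1), f i =
      (∑ i ∈ Finset.Ico l (Lseq d ψ φ (j-1)), f i) +
      ∑ i ∈ Finset.Ico (Lseq d ψ φ (j-1)) (d+1), f i := by
    intro f
    rw [Finset.sum_Ico_consecutive _ (by omega : l ≤ Lseq d ψ φ (j-1)) (by omega)]
  have hblock : ∀ i ∈ Finset.Ico l (Lseq d ψ φ (j-1)), Rfun d ψ φ i = Qseq d ψ φ j := by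
    intro i hi
    rw [Finset.mem_Ico] at hi
    exact R_on_block S hJ1 hJK (by omega) hi.2
  have hRl : Rfun d ψ φ l = Qseq d ψ φ j := R_on_block S hJ1 hJK hJm hJu
  have htail := tailB S (j-1) (by omega)
  rw [hsplit, hsplit, htail.1, htail.2]
  have e1 : ∑ i ∈ Finset.Ico l (Lseq d ψ φ (j-1)), Rfun d ψ φ i * meet2 ψ φ i =
      Qseq d ψ φ j * ∑ i ∈ Finset.Ico l (Lseq d ψ φ (j-1)), meet2 ψ φ i := by
    rw [Finset.mul_sum]
    exact Finset.sum_congr rfl (fun i hi => by rw [hblock i hi])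
  have e2 : ∑ i ∈ Finset.Ico l (Lseq d ψ φ (j-1)), Rfun d ψ φ i * φ i =
      Qseq d ψ φ j * ∑ i ∈ Finset.Ico l (Lseq d ψ φ (j-1)), φ i := by
    rw [Finset.mul_sum]
    exact Finset.sum_congr rfl (fun i hi => by rw [hblock i hi])
  rw [e1, e2, ← Cm_sub d (meet2 ψ φ) (by omega) (by omega),
    ← Cm_sub d φ (by omega) (by omega),
    Cm_meet S (by omega) (by omega), Cm_meet S (by omega) (by omega),
    max_eq_right (D_nonpos S (j-1) (by omega)), hRl]
  ring


lemma mu_eq (S : Setup d ψ φ) {i : ℕ} (h1 : 1 ≤ i) (hi : i ≤ d)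
    (hq1 : Qseq d ψ φ 1 < 1) :
    nvec d ψ φ i * phif d ψ φ i =
      (Rfun d ψ φ i - Qseq d ψ φ 1) * φ i / (1 - Qseq d ψ φ 1) := by
  obtain ⟨hge, hpos⟩ := R_props S h1 hi
  have h1q : (1:ℝ) - Qseq d ψ φ 1 ≠ 0 := by linarith
  rw [Rfun] at hpos ⊢
  rw [nvec, phif]
  field_simp

lemma nu_eq (S : Setup d ψ φ) {i : ℕ} (h1 : 1 ≤ i) (hi : i ≤ d)
    (hq1 : Qseq d ψ φ 1 < 1) :
    nvec d ψ φ i * phit d ψ φ i =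
      (Rfun d ψ φ i - Qseq d ψ φ 1) * meet2 ψ φ i / (1 - Qseq d ψ φ 1) := by
  obtain ⟨hge, hpos⟩ := R_props S h1 hi
  have h1q : (1:ℝ) - Qseq d ψ φ 1 ≠ 0 := by linarith
  rw [Rfun] at hpos ⊢
  rw [nvec, phit]
  field_simp

lemma sum_Rphi (S : Setup d ψ φ) : ∑ i ∈ Finset.Ico 1 (d+1), Rfun d ψ φ i * φ i = 1 := by
  have h := (tailB S (kstop d ψ φ) (le_refl _)).1
  rw [L_kstop S] at h
  rw [h, Cm_one_ψ S]

lemma sum_Rmeet (S : Setup d ψ φ) :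
    ∑ i ∈ Finset.Ico 1 (d+1), Rfun d ψ φ i * meet2 ψ φ i = 1 := by
  have h := (tailB S (kstop d ψ φ) (le_refl _)).2
  rw [L_kstop S] at h
  rw [h, Cm_one_ψ S]

lemma sum_meet_one (S : Setup d ψ φ) : ∑ i ∈ Finset.Icc 1 d, meet2 ψ φ i = 1 := by
  rw [prefix_meet, S.hψ.sum_one, S.hφ.sum_one]
  simp

lemma tail_mu (S : Setup d ψ φ) (hq1 : Qseq d ψ φ 1 < 1) {l : ℕ} (h1 : 1 ≤ l)
    (hl : l ≤ d + 1) :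
    ∑ i ∈ Finset.Ico l (d+1), nvec d ψ φ i * phif d ψ φ i =
      ((∑ i ∈ Finset.Ico l (d+1), Rfun d ψ φ i * φ i) - Qseq d ψ φ 1 * Cm d φ l) /
        (1 - Qseq d ψ φ 1) := by
  have hcong : ∀ i ∈ Finset.Ico l (d+1), nvec d ψ φ i * phif d ψ φ i =
      (Rfun d ψ φ i * φ i - Qseq d ψ φ 1 * φ i) / (1 - Qseq d ψ φ 1) := by
    intro i hi
    rw [Finset.mem_Ico] at hi
    rw [mu_eq S (by omega) (by omega) hq1]
    ring
  rw [Finset.sum_congr rfl hcong, ← Finset.sum_div, Finset.sum_sub_distrib,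
    ← Finset.mul_sum, Cm_Ico d φ]

lemma tail_nu (S : Setup d ψ φ) (hq1 : Qseq d ψ φ 1 < 1) {l : ℕ} (h1 : 1 ≤ l)
    (hl : l ≤ d + 1) :
    ∑ i ∈ Finset.Ico l (d+1), nvec d ψ φ i * phit d ψ φ i =
      ((∑ i ∈ Finset.Ico l (d+1), Rfun d ψ φ i * meet2 ψ φ i) -
        Qseq d ψ φ 1 * Cm d (meet2 ψ φ) l) / (1 - Qseq d ψ φ 1) := by
  have hcong : ∀ i ∈ Finset.Ico l (d+1), nvec d ψ φ i * phit d ψ φ i =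
      (Rfun d ψ φ i * meet2 ψ φ i - Qseq d ψ φ 1 * meet2 ψ φ i) / (1 - Qseq d ψ φ 1) := by
    intro i hi
    rw [Finset.mem_Ico] at hi
    rw [nu_eq S (by omega) (by omega) hq1]
    ring
  rw [Finset.sum_congr rfl hcong, ← Finset.sum_div, Finset.sum_sub_distrib,
    ← Finset.mul_sum, Cm_Ico d (meet2 ψ φ)]

lemma sum_mu_one (S : Setup d ψ φ) (hq1 : Qseq d ψ φ 1 < 1) :
    ∑ i ∈ Finset.Icc 1 d, nvec d ψ φ i * phif d ψ φ i = 1 := by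
  rw [← Finset.Ico_add_one_right_eq_Icc, tail_mu S hq1 (le_refl 1) (by omega), sum_Rphi S,
    Cm_one_φ S, mul_one]
  exact div_self (by linarith)

lemma sum_nu_one (S : Setup d ψ φ) (hq1 : Qseq d ψ φ 1 < 1) :
    ∑ i ∈ Finset.Icc 1 d, nvec d ψ φ i * phit d ψ φ i = 1 := by
  rw [← Finset.Ico_add_one_right_eq_Icc, tail_nu S hq1 (le_refl 1) (by omega), sum_Rmeet S,
    Cm_meet S (le_refl 1) (by omega), Cm_one_ψ S, Cm_one_φ S, max_self, mul_one]
  exact div_self (by linarith)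

lemma tail_le (S : Setup d ψ φ) (hq1 : Qseq d ψ φ 1 < 1) {l : ℕ} (h1 : 1 ≤ l)
    (hl : l ≤ d) :
    ∑ i ∈ Finset.Ico l (d+1), nvec d ψ φ i * phif d ψ φ i ≤
      ∑ i ∈ Finset.Ico l (d+1), nvec d ψ φ i * phit d ψ φ i := by
  rw [tail_mu S hq1 h1 (by omega), tail_nu S hq1 h1 (by omega)]
  have hdiff := tail_diff S h1 hl
  have hRge := (R_props S h1 hl).1
  have hMge : Cm d φ l ≤ Cm d (meet2 ψ φ) l := by
    rw [Cm_meet S h1 (by omega)]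
    exact le_max_right _ _
  have hc : (0:ℝ) < 1 - Qseq d ψ φ 1 := by linarith
  have key : (∑ i ∈ Finset.Ico l (d+1), Rfun d ψ φ i * φ i) - Qseq d ψ φ 1 * Cm d φ l ≤
      (∑ i ∈ Finset.Ico l (d+1), Rfun d ψ φ i * meet2 ψ φ i) -
        Qseq d ψ φ 1 * Cm d (meet2 ψ φ) l := by
    nlinarith [mul_nonneg (sub_nonneg.mpr hRge) (sub_nonneg.mpr hMge)]
  exact (div_le_div_iff_of_pos_right hc).mpr key


end ThriftyAux

/-- Upon failure of the probabilistic transformation, the residual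
vectors `μ_i = n_i φ^f_i` (greedy) and `ν_i = n_i φ^t_i` (thrifty) are descending
probability vectors and `ν ≺ μ`: the thrifty residual is more coherent. -/
theorem thrifty_residual_majorized (d : ℕ) (hd : 1 ≤ d) (ψ φ : ℕ → ℝ)
    (hψ : DescProb d ψ) (hφ : DescProb d φ)
    (hψpos : ∀ i, 1 ≤ i → i ≤ d → 0 < ψ i) (hφpos : ∀ i, 1 ≤ i → i ≤ d → 0 < φ i)
    (hnm : ¬ MajorizedBy d ψ φ) :
    DescProb d (fun i => nvec d ψ φ i * phif d ψ φ i) ∧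
      DescProb d (fun i => nvec d ψ φ i * phit d ψ φ i) ∧
      MajorizedBy d (fun i => nvec d ψ φ i * phit d ψ φ i)
        (fun i => nvec d ψ φ i * phif d ψ φ i) := by
  have S : ThriftyAux.Setup d ψ φ := ⟨hd, hψ, hφ, hψpos, hφpos⟩
  have hq1 := ThriftyAux.q1_lt_one S hnm
  have hq1p := ThriftyAux.q1_pos S
  have hc : (0:ℝ) < 1 - Qseq d ψ φ 1 := by linarith
  have hManti : ∀ i j, 1 ≤ i → i ≤ j → j ≤ d → meet2 ψ φ j ≤ meet2 ψ φ i :=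
    ThriftyAux.anti_of_adj d (meet2 ψ φ) (fun i a b => ThriftyAux.meet_adj S a b)
  refine ⟨⟨?_, ?_, ?_⟩, ⟨?_, ?_, ?_⟩, ?_, ?_⟩
  · intro i h1 hi
    show 0 ≤ nvec d ψ φ i * phif d ψ φ i
    rw [ThriftyAux.mu_eq S h1 hi hq1]
    apply div_nonneg _ (by linarith)
    apply mul_nonneg _ (hφ.nonneg i h1 hi)
    have := (ThriftyAux.R_props S h1 hi).1
    linarith
  · intro i j h1 hij hjd
    show nvec d ψ φ j * phif d ψ φ j ≤ nvec d ψ φ i * phif d ψ φ i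
    rw [ThriftyAux.mu_eq S (by omega) hjd hq1, ThriftyAux.mu_eq S h1 (by omega) hq1]
    apply (div_le_div_iff_of_pos_right hc).mpr
    apply mul_le_mul
    · have := ThriftyAux.R_anti S h1 hij hjd
      linarith
    · exact hφ.anti i j h1 hij hjd
    · exact hφ.nonneg j (by omega) hjd
    · have := (ThriftyAux.R_props S h1 (by omega)).1
      linarith
  · exact ThriftyAux.sum_mu_one S hq1
  · intro i h1 hi
    show 0 ≤ nvec d ψ φ i * phit d ψ φ i
    rw [ThriftyAux.nu_eq S h1 hi hq1]
    apply div_nonneg _ (by linarith)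
    apply mul_nonneg _ (ThriftyAux.meet_nonneg S h1 hi)
    have := (ThriftyAux.R_props S h1 hi).1
    linarith
  · intro i j h1 hij hjd
    show nvec d ψ φ j * phit d ψ φ j ≤ nvec d ψ φ i * phit d ψ φ i
    rw [ThriftyAux.nu_eq S (by omega) hjd hq1, ThriftyAux.nu_eq S h1 (by omega) hq1]
    apply (div_le_div_iff_of_pos_right hc).mpr
    apply mul_le_mul
    · have := ThriftyAux.R_anti S h1 hij hjd
      linarith
    · exact hManti i j h1 hij hjd
    · exact ThriftyAux.meet_nonneg S (by omega) hjd
    · have := (ThriftyAux.R_props S h1 (by omega)).1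
      linarith
  · exact ThriftyAux.sum_nu_one S hq1
  · intro k hk1 hkd
    show ∑ i ∈ Finset.Icc 1 k, nvec d ψ φ i * phit d ψ φ i ≤
      ∑ i ∈ Finset.Icc 1 k, nvec d ψ φ i * phif d ψ φ i
    rcases eq_or_lt_of_le hkd with rfl | hk
    · rw [ThriftyAux.sum_nu_one S hq1, ThriftyAux.sum_mu_one S hq1]
    · have hsplit : ∀ f : ℕ → ℝ, ∑ i ∈ Finset.Icc 1 d, f i =
          (∑ i ∈ Finset.Icc 1 k, f i) + ∑ i ∈ Finset.Ico (k+1) (d+1), f i := by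
        intro f
        rw [← Finset.Ico_add_one_right_eq_Icc (a := 1),
          ← Finset.sum_Ico_consecutive f (by omega : 1 ≤ k+1) (by omega : k+1 ≤ d+1),
          Finset.Ico_add_one_right_eq_Icc]
      have h1 := hsplit (fun i => nvec d ψ φ i * phit d ψ φ i)
      have h2 := hsplit (fun i => nvec d ψ φ i * phif d ψ φ i)
      rw [ThriftyAux.sum_nu_one S hq1] at h1
      rw [ThriftyAux.sum_mu_one S hq1] at h2
      have htail := ThriftyAux.tail_le S hq1 (l := k+1) (by omega) (by omega)
      linarith
  · show ∑ i ∈ Finset.Icc 1 d, nvec d ψ φ i * phit d ψ φ i =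
      ∑ i ∈ Finset.Icc 1 d, nvec d ψ φ i * phif d ψ φ i
    rw [ThriftyAux.sum_nu_one S hq1, ThriftyAux.sum_mu_one S hq1]
end

section
/- Let ψ, φ^1, …, φ^m ∈ ℝ^d be descending probability vectors with all entries strictly positive, let φ^∧_e = ψ ∧ φ^1 ∧ ⋯ ∧ φ^m be their meet, and define q_I(x) = min_{l ∈ {1,…,d}} C_l(ψ)/C_l(x). If there exist ι ∈ {1,…,m} and l ∈ {1,…,d} with C_l(ψ) ≤ C_l(φ^ι), then the bound is saturated by the least individual probability: q_I(φ^∧_e) = min_{ι ∈ {1,…,m}} q_I(φ^ι). -/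
open Finset

/-- The meet `ψ ∧ φ^1 ∧ ⋯ ∧ φ^m` of `ψ` and a family `φ` of descending probability
vectors in the majorization lattice, defined componentwise via prefix sums. -/
noncomputable def meetAll (ψ : ℕ → ℝ) (m : ℕ) (φ : Fin m → ℕ → ℝ) (i : ℕ) : ℝ :=
  min (∑ j ∈ Finset.Icc 1 i, ψ j) (⨅ ι, ∑ j ∈ Finset.Icc 1 i, φ ι j) -
    min (∑ j ∈ Finset.Icc 1 (i - 1), ψ j) (⨅ ι, ∑ j ∈ Finset.Icc 1 (i - 1), φ ι j)

/-- The maximal probability `q_I(x) = min_{l ∈ {1,…,d}} C_l(ψ) / C_l(x)` of transforming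
the initial vector `ψ` into the target vector `x`. -/
noncomputable def qI (d : ℕ) (ψ x : ℕ → ℝ) : ℝ :=
  sInf {r : ℝ | ∃ l, 1 ≤ l ∧ l ≤ d ∧ r = Cm d ψ l / Cm d x l}

lemma Cm_pos (d : ℕ) (p : ℕ → ℝ) (hp : ∀ i, 1 ≤ i → i ≤ d → 0 < p i)
    (l : ℕ) (hl1 : 1 ≤ l) (hld : l ≤ d) : 0 < Cm d p l := by
  apply Finset.sum_pos
  · intro i hi
    simp only [Finset.mem_Icc] at hi
    exact hp i (le_trans hl1 hi.1) hi.2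
  · exact ⟨d, by simp [Finset.mem_Icc, hld]⟩

lemma Cm_eq_sub (d : ℕ) (p : ℕ → ℝ) (l : ℕ) (hl1 : 1 ≤ l) (hld : l ≤ d) :
    Cm d p l = (∑ i ∈ Icc 1 d, p i) - ∑ i ∈ Icc 1 (l - 1), p i := by
  have h1 : Icc 1 (l - 1) = Ioc 0 (l - 1) := Finset.Icc_add_one_left_eq_Ioc 0 (l - 1)
  have h2 : Icc l d = Ioc (l - 1) d := by
    rw [← Finset.Icc_add_one_left_eq_Ioc]
    congr 1
    omega
  have h3 : Icc 1 d = Ioc 0 d := Finset.Icc_add_one_left_eq_Ioc 0 d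
  have := Finset.sum_Ioc_consecutive p (m := 0) (n := l - 1) (k := d)
    (Nat.zero_le _) (by omega)
  rw [Cm, h1, h2, h3, ← this]
  ring

lemma meet_prefix (ψ : ℕ → ℝ) (m : ℕ) (hm : 1 ≤ m) (φ : Fin m → ℕ → ℝ) (k : ℕ) :
    ∑ i ∈ Icc 1 k, meetAll ψ m φ i
      = min (∑ j ∈ Icc 1 k, ψ j) (⨅ ι, ∑ j ∈ Icc 1 k, φ ι j) := by
  haveI : Nonempty (Fin m) := ⟨⟨0, hm⟩⟩
  set f : ℕ → ℝ := fun k =>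
    min (∑ j ∈ Icc 1 k, ψ j) (⨅ ι, ∑ j ∈ Icc 1 k, φ ι j) with hf
  have hf0 : f 0 = 0 := by simp [hf]
  have hstep : ∑ i ∈ Icc 1 k, meetAll ψ m φ i = ∑ i ∈ range k, (f (i + 1) - f i) := by
    rw [show Icc 1 k = Ioc 0 k from Finset.Icc_add_one_left_eq_Ioc 0 k, ← Finset.Ico_add_one_add_one_eq_Ioc]
    rw [Finset.sum_Ico_eq_sum_range]
    apply Finset.sum_congr (by simp) (fun i _ => ?_)
    show meetAll ψ m φ (1 + i) = _
    unfold meetAll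
    rw [show 1 + i - 1 = i by omega, show 1 + i = i + 1 by omega]
  rw [hstep, Finset.sum_range_sub f, hf0, sub_zero]

/-- If some `C_l(ψ) ≤ C_l(φ^ι)`, then the bound is saturated by the
least individual probability: `q_I(φ^∧_e) = min_ι q_I(φ^ι)`. -/
theorem ocr_probability_eq (d m : ℕ) (hd : 1 ≤ d) (hm : 1 ≤ m)
    (ψ : ℕ → ℝ) (φ : Fin m → ℕ → ℝ)
    (hψ : DescProb d ψ) (hφ : ∀ ι, DescProb d (φ ι))
    (hψpos : ∀ i, 1 ≤ i → i ≤ d → 0 < ψ i)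
    (hφpos : ∀ ι i, 1 ≤ i → i ≤ d → 0 < φ ι i)
    (hex : ∃ ι, ∃ l, 1 ≤ l ∧ l ≤ d ∧ Cm d ψ l ≤ Cm d (φ ι) l) :
    qI d ψ (meetAll ψ m φ) = ⨅ ι, qI d ψ (φ ι) := by
  haveI : Nonempty (Fin m) := ⟨⟨0, hm⟩⟩
  have hsum_g : ∑ i ∈ Icc 1 d, meetAll ψ m φ i = 1 := by
    rw [meet_prefix ψ m hm φ d, hψ.sum_one]
    have h1 : ∀ ι, ∑ j ∈ Icc 1 d, φ ι j = 1 := fun ι => (hφ ι).sum_one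
    simp [h1]
  have hA : ∀ l, 1 ≤ l → l ≤ d → 0 < Cm d ψ l := Cm_pos d ψ hψpos
  have hB : ∀ ι l, 1 ≤ l → l ≤ d → 0 < Cm d (φ ι) l :=
    fun ι => Cm_pos d (φ ι) (hφpos ι)
  have hGA : ∀ l, 1 ≤ l → l ≤ d → Cm d ψ l ≤ Cm d (meetAll ψ m φ) l := by
    intro l h1 h2
    rw [Cm_eq_sub d ψ l h1 h2, Cm_eq_sub d (meetAll ψ m φ) l h1 h2, hψ.sum_one, hsum_g,
      meet_prefix ψ m hm φ (l - 1)]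
    exact sub_le_sub_left (min_le_left _ _) 1
  have hGB : ∀ ι l, 1 ≤ l → l ≤ d → Cm d (φ ι) l ≤ Cm d (meetAll ψ m φ) l := by
    intro ι l h1 h2
    rw [Cm_eq_sub d (φ ι) l h1 h2, Cm_eq_sub d (meetAll ψ m φ) l h1 h2, (hφ ι).sum_one,
      hsum_g, meet_prefix ψ m hm φ (l - 1)]
    exact sub_le_sub_left ((min_le_right _ _).trans (ciInf_le (Finite.bddBelow_range _) ι)) 1
  have hG : ∀ l, 1 ≤ l → l ≤ d → 0 < Cm d (meetAll ψ m φ) l :=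
    fun l h1 h2 => lt_of_lt_of_le (hA l h1 h2) (hGA l h1 h2)
  have hGcases : ∀ l, 1 ≤ l → l ≤ d →
      Cm d (meetAll ψ m φ) l = Cm d ψ l ∨ ∃ ι, Cm d (meetAll ψ m φ) l = Cm d (φ ι) l := by
    intro l h1 h2
    rw [Cm_eq_sub d (meetAll ψ m φ) l h1 h2, hsum_g, meet_prefix ψ m hm φ (l - 1)]
    rcases min_cases (∑ j ∈ Icc 1 (l - 1), ψ j) (⨅ ι, ∑ j ∈ Icc 1 (l - 1), φ ι j) with h | h
    · left
      rw [h.1, Cm_eq_sub d ψ l h1 h2, hψ.sum_one]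
    · right
      obtain ⟨ι₀, hι₀⟩ := Finite.exists_min (fun ι => ∑ j ∈ Icc 1 (l - 1), φ ι j)
      refine ⟨ι₀, ?_⟩
      rw [h.1, Cm_eq_sub d (φ ι₀) l h1 h2, (hφ ι₀).sum_one]
      congr 1
      exact le_antisymm (ciInf_le (Finite.bddBelow_range _) ι₀) (le_ciInf hι₀)
  -- the sets
  set S : (ℕ → ℝ) → Set ℝ :=
    fun x => {r : ℝ | ∃ l, 1 ≤ l ∧ l ≤ d ∧ r = Cm d ψ l / Cm d x l} with hS
  have hqI : ∀ x, qI d ψ x = sInf (S x) := fun x => rfl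
  have hSne : ∀ x, (S x).Nonempty := fun x => ⟨Cm d ψ 1 / Cm d x 1, 1, le_refl 1, hd, rfl⟩
  have hSbdd : ∀ x, (∀ l, 1 ≤ l → l ≤ d → 0 < Cm d x l) → BddBelow (S x) := by
    intro x hx
    refine ⟨0, ?_⟩
    rintro r ⟨l, h1, h2, rfl⟩
    exact div_nonneg (hA l h1 h2).le (hx l h1 h2).le
  have hbddg : BddBelow (S (meetAll ψ m φ)) := hSbdd _ hG
  have hbddφ : ∀ ι, BddBelow (S (φ ι)) := fun ι => hSbdd _ (hB ι)
  have hbddR : BddBelow (Set.range fun ι => qI d ψ (φ ι)) := Finite.bddBelow_range _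
  -- R ≤ 1
  obtain ⟨ι₀, l₀, hl₀1, hl₀2, hle⟩ := hex
  have hR1 : (⨅ ι, qI d ψ (φ ι)) ≤ 1 := by
    refine (ciInf_le hbddR ι₀).trans ?_
    rw [hqI]
    refine (csInf_le (hbddφ ι₀) ⟨l₀, hl₀1, hl₀2, rfl⟩).trans ?_
    rw [div_le_one (hB ι₀ l₀ hl₀1 hl₀2)]
    exact hle
  apply le_antisymm
  · -- L ≤ R
    apply le_ciInf
    intro ι
    rw [hqI, hqI]
    apply le_csInf (hSne _)
    rintro r ⟨l, h1, h2, rfl⟩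
    refine (csInf_le hbddg ⟨l, h1, h2, rfl⟩).trans ?_
    exact div_le_div_of_nonneg_left (hA l h1 h2).le (hB ι l h1 h2) (hGB ι l h1 h2)
  · -- R ≤ L
    rw [hqI]
    apply le_csInf (hSne _)
    rintro r ⟨l, h1, h2, rfl⟩
    rcases hGcases l h1 h2 with h | ⟨ι, h⟩
    · rw [h, div_self (hA l h1 h2).ne']
      exact hR1
    · rw [h]
      refine (ciInf_le hbddR ι).trans ?_
      rw [hqI]
      exact csInf_le (hbddφ ι) ⟨l, h1, h2, rfl⟩
end
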